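/- arXiv:2010.11417 — 3 statements merged into one kernel-verified Lean document; each statement's English description precedes it below -/
import Mathlib

section
/- Let Λ be a symmetric positive definite (p+h)×(p+h) matrix with blocks Λ_zz (p×p, positive definite), Λ_zx (p×h), Λ_xx (h×h); let Γ_zz be a symmetric positive definite p×p matrix and Γ_zx a p×h matrix; let D be a diagonal h×h matrix with positive diagonal entries. Define Ω_zx as the 2p×h matrix stacking Γ_zx on top of Λ_zx, and Ω_zz = [[Γ_zz⁻¹ Λ_zz Γ_zz⁻¹, −Γ_zz⁻¹], [−Γ_zz⁻¹, Λ_zz⁻¹]]. Then V = D⁻¹ (Ω_zx' Ω_zz Ω_zx + Λ_xx − Λ_zx' Λ_zz⁻¹ Λ_zx) D⁻¹ is positive definite. -/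
open Matrix

lemma aux11 {m n : Type*} [Fintype m] [Fintype n] [DecidableEq m] [DecidableEq n]
    {A : Matrix m m ℝ} {B : Matrix m n ℝ} {D : Matrix n n ℝ}
    (hΛ : (fromBlocks A B Bᵀ D).PosDef) : A.PosDef := by
  refine posDef_iff_dotProduct_mulVec.mpr ⟨?_, ?_⟩
  · have h1 := congrArg Matrix.toBlocks₁₁ hΛ.1.eq
    simpa [fromBlocks_conjTranspose, fromBlocks_transpose, Matrix.IsSymm] using h1
  · intro x hx
    have hne : (x ⊕ᵥ (0 : n → ℝ)) ≠ 0 := by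
      intro hc
      exact hx (funext fun i => congrFun hc (Sum.inl i))
    have := hΛ.dotProduct_mulVec_pos hne
    simpa [fromBlocks_mulVec, Function.star_sumElim] using this

lemma auxSchur {m n : Type*} [Fintype m] [Fintype n] [DecidableEq m] [DecidableEq n]
    {A : Matrix m m ℝ} {B : Matrix m n ℝ} {D : Matrix n n ℝ}
    (hΛ : (fromBlocks A B Bᵀ D).PosDef) (hA : A.PosDef) [Invertible A] :
    (D - Bᵀ * A⁻¹ * B).PosDef := by
  refine posDef_iff_dotProduct_mulVec.mpr ⟨?_, ?_⟩
  · exact (Matrix.IsHermitian.fromBlocks₁₁ B D hA.1).mp hΛ.1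
  · intro x hx
    have hne : ((-((A⁻¹ * B) *ᵥ x)) ⊕ᵥ x) ≠ 0 := by
      intro hc
      exact hx (funext fun i => congrFun hc (Sum.inr i))
    have h2 := hΛ.dotProduct_mulVec_pos hne
    rw [show Bᵀ = Bᴴ from rfl] at h2
    rw [dotProduct_mulVec, schur_complement_eq₁₁ B D _ _ hA.1, neg_add_cancel,
      dotProduct_zero, zero_add, ← dotProduct_mulVec] at h2
    exact h2

lemma auxConj {n : Type*} [Fintype n] [DecidableEq n]
    {M : Matrix n n ℝ} (hM : M.PosDef) {B : Matrix n n ℝ} (hB : IsUnit B) :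
    (Bᵀ * M * B).PosDef := by
  refine posDef_iff_dotProduct_mulVec.mpr ⟨?_, ?_⟩
  · exact Matrix.isHermitian_conjTranspose_mul_mul B hM.1
  · intro x hx
    have hBx : B *ᵥ x ≠ 0 := by
      intro hc
      apply hx
      have := Matrix.mulVec_injective_iff_isUnit.2 hB (a₁ := x) (a₂ := 0)
      simpa [hc] using this (by simp [hc])
    have h2 := hM.dotProduct_mulVec_pos hBx
    have : star x ⬝ᵥ (Bᵀ * M * B) *ᵥ x = star (B *ᵥ x) ⬝ᵥ M *ᵥ (B *ᵥ x) := by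
      rw [← mulVec_mulVec, ← mulVec_mulVec, dotProduct_mulVec (star x),
        star_trivial, star_trivial, vecMul_transpose]
    rw [this]
    exact h2

theorem V_posDef (p h : ℕ)
    (Λzz : Matrix (Fin p) (Fin p) ℝ) (Λzx : Matrix (Fin p) (Fin h) ℝ)
    (Λxx : Matrix (Fin h) (Fin h) ℝ)
    (hΛ : (Matrix.fromBlocks Λzz Λzx Λzxᵀ Λxx).PosDef)
    (Γzz : Matrix (Fin p) (Fin p) ℝ) (hΓzz : Γzz.PosDef)
    (Γzx : Matrix (Fin p) (Fin h) ℝ)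
    (d : Fin h → ℝ) (hd : ∀ i, 0 < d i) :
    ((Matrix.diagonal d)⁻¹ *
      ((Matrix.fromRows Γzx Λzx)ᵀ *
        (Matrix.fromBlocks (Γzz⁻¹ * Λzz * Γzz⁻¹) (-Γzz⁻¹) (-Γzz⁻¹) Λzz⁻¹) *
        (Matrix.fromRows Γzx Λzx)
       + Λxx - Λzxᵀ * Λzz⁻¹ * Λzx) *
      (Matrix.diagonal d)⁻¹).PosDef := by
  have hΛzz : Λzz.PosDef := aux11 hΛ
  haveI : Invertible Λzz := hΛzz.isUnit.invertible
  have hSchur : (Λxx - Λzxᵀ * Λzz⁻¹ * Λzx).PosDef := auxSchur hΛ hΛzz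
  have hΓi : (Γzz⁻¹)ᵀ = Γzz⁻¹ := by
    rw [transpose_nonsing_inv, show Γzzᵀ = Γzz from hΓzz.1]
  have hΛs : Λzzᵀ = Λzz := hΛzz.1
  set K : Matrix (Fin p) (Fin p ⊕ Fin p) ℝ := fromCols (Λzz * Γzz⁻¹) (-1) with hK
  have hΩ : fromBlocks (Γzz⁻¹ * Λzz * Γzz⁻¹) (-Γzz⁻¹) (-Γzz⁻¹) Λzz⁻¹ = Kᵀ * Λzz⁻¹ * K := by
    rw [hK, transpose_fromCols, transpose_mul, hΓi, hΛs, transpose_neg, transpose_one,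
      fromRows_mul, fromRows_mul_fromCols]
    simp [Matrix.mul_assoc, Matrix.mul_inv_cancel_left_of_invertible,
      Matrix.inv_mul_cancel_left_of_invertible, Matrix.mul_inv_of_invertible,
      Matrix.inv_mul_of_invertible]
  have hPSD : ((fromRows Γzx Λzx)ᵀ *
      fromBlocks (Γzz⁻¹ * Λzz * Γzz⁻¹) (-Γzz⁻¹) (-Γzz⁻¹) Λzz⁻¹ *
      fromRows Γzx Λzx).PosSemidef := by
    rw [hΩ]
    have h3 := (hΛzz.inv.posSemidef).conjTranspose_mul_mul_same (K * fromRows Γzx Λzx)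
    rw [show (K * fromRows Γzx Λzx)ᴴ = (K * fromRows Γzx Λzx)ᵀ from rfl, transpose_mul] at h3
    simpa [Matrix.mul_assoc] using h3
  have hM : ((fromRows Γzx Λzx)ᵀ *
      fromBlocks (Γzz⁻¹ * Λzz * Γzz⁻¹) (-Γzz⁻¹) (-Γzz⁻¹) Λzz⁻¹ *
      fromRows Γzx Λzx + (Λxx - Λzxᵀ * Λzz⁻¹ * Λzx)).PosDef :=
    Matrix.PosDef.posSemidef_add hPSD hSchur
  have hd' : ((diagonal d)⁻¹)ᵀ = (diagonal d)⁻¹ := by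
    rw [transpose_nonsing_inv, diagonal_transpose]
  have hu : IsUnit ((diagonal d)⁻¹) := (Matrix.PosDef.diagonal hd).inv.isUnit
  rw [add_sub_assoc]
  have := auxConj hM hu
  rwa [hd'] at this
end

section
/- Suppose Λ = σ² Γ for σ² > 0, where Γ is symmetric positive definite of size p+h with blocks Γ_zz, Γ_zx, Γ_xx. Then V = D⁻¹(Ω_zx' Ω_zz Ω_zx + Λ_xx − Λ_zx' Λ_zz⁻¹ Λ_zx)D⁻¹ simplifies to V = σ² D⁻¹ (Γ_xx − Γ_zx' Γ_zz⁻¹ Γ_zx) D⁻¹, where Ω_zx = [Γ_zx; σ²Γ_zx] and Ω_zz = [[σ²Γ_zz⁻¹, −Γ_zz⁻¹], [−Γ_zz⁻¹, σ⁻²Γ_zz⁻¹]]. -/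
open Matrix

lemma posDef_topLeft {p h : ℕ} {A : Matrix (Fin p) (Fin p) ℝ} {B : Matrix (Fin p) (Fin h) ℝ}
    {C : Matrix (Fin h) (Fin h) ℝ} (hΓ : (Matrix.fromBlocks A B Bᵀ C).PosDef) : A.PosDef := by
  refine Matrix.PosDef.of_dotProduct_mulVec_pos ?_ ?_
  · have h1 := hΓ.1
    ext i j
    have := congrFun (congrFun h1 (Sum.inl j)) (Sum.inl i)
    simpa [Matrix.conjTranspose, Matrix.IsHermitian] using this.symm
  · intro x hx
    have hx' : Sum.elim x (0 : Fin h → ℝ) ≠ 0 := by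
      intro hcontra
      apply hx
      funext i
      exact congrFun hcontra (Sum.inl i)
    have := hΓ.dotProduct_mulVec_pos hx'
    simpa [Matrix.fromBlocks_mulVec, Matrix.dotProduct_block] using this

theorem V_homoscedastic (p h : ℕ)
    (Γzz : Matrix (Fin p) (Fin p) ℝ) (Γzx : Matrix (Fin p) (Fin h) ℝ)
    (Γxx : Matrix (Fin h) (Fin h) ℝ)
    (hΓ : (Matrix.fromBlocks Γzz Γzx Γzxᵀ Γxx).PosDef)
    (σ2 : ℝ) (hσ : 0 < σ2)
    (D : Matrix (Fin h) (Fin h) ℝ) (hD : IsUnit D.det) :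
    D⁻¹ *
      ((Matrix.fromRows Γzx (σ2 • Γzx))ᵀ *
        (Matrix.fromBlocks (σ2 • Γzz⁻¹) (-Γzz⁻¹) (-Γzz⁻¹) (σ2⁻¹ • Γzz⁻¹)) *
        (Matrix.fromRows Γzx (σ2 • Γzx))
       + σ2 • Γxx - (σ2 • Γzx)ᵀ * (σ2 • Γzz)⁻¹ * (σ2 • Γzx)) *
      D⁻¹
    = σ2 • (D⁻¹ * (Γxx - Γzxᵀ * Γzz⁻¹ * Γzx) * D⁻¹) := by
  have hσ' : σ2 ≠ 0 := ne_of_gt hσ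
  have hzz : Γzz.PosDef := posDef_topLeft hΓ
  have hdet : IsUnit Γzz.det := hzz.isUnit.map (MonoidHom.id _) |>.map detMonoidHom
  letI : Invertible σ2 := invertibleOfNonzero hσ'
  have hsmulinv : (σ2 • Γzz)⁻¹ = σ2⁻¹ • Γzz⁻¹ := by
    apply Matrix.inv_eq_left_inv
    rw [Matrix.smul_mul, Matrix.mul_smul, smul_smul, inv_mul_cancel₀ hσ',
      Matrix.nonsing_inv_mul _ hdet, one_smul]
  have key : (Matrix.fromRows Γzx (σ2 • Γzx))ᵀ *
        (Matrix.fromBlocks (σ2 • Γzz⁻¹) (-Γzz⁻¹) (-Γzz⁻¹) (σ2⁻¹ • Γzz⁻¹)) *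
        (Matrix.fromRows Γzx (σ2 • Γzx))
       + σ2 • Γxx - (σ2 • Γzx)ᵀ * (σ2 • Γzz)⁻¹ * (σ2 • Γzx)
      = σ2 • (Γxx - Γzxᵀ * Γzz⁻¹ * Γzx) := by
    rw [hsmulinv, Matrix.transpose_fromRows, Matrix.fromCols_mul_fromBlocks,
      Matrix.fromCols_mul_fromRows]
    simp only [Matrix.transpose_smul, Matrix.smul_mul, Matrix.mul_smul, Matrix.neg_mul,
      Matrix.mul_neg, Matrix.add_mul, Matrix.mul_add, smul_smul, smul_neg, smul_add, smul_sub]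
    match_scalars <;> field_simp <;> ring
  rw [key, Matrix.mul_smul, Matrix.smul_mul]
end

section
/- For symmetric positive definite matrices Γ_zz, Λ_zz of size p and a 2p×h matrix W, the matrix W' Ω_zz W is positive semidefinite, where Ω_zz = [[Γ_zz⁻¹ Λ_zz Γ_zz⁻¹, −Γ_zz⁻¹], [−Γ_zz⁻¹, Λ_zz⁻¹]]. -/
open Matrix

theorem W_omega_W_posSemidef (p h : ℕ)
    (Γzz Λzz : Matrix (Fin p) (Fin p) ℝ)
    (hΓzz : Γzz.PosDef) (hΛzz : Λzz.PosDef)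
    (W : Matrix (Fin p ⊕ Fin p) (Fin h) ℝ) :
    (Wᵀ * (Matrix.fromBlocks (Γzz⁻¹ * Λzz * Γzz⁻¹) (-Γzz⁻¹) (-Γzz⁻¹) Λzz⁻¹) * W).PosSemidef := by
  have hΓi : Γzz⁻¹.IsHermitian := hΓzz.isHermitian.inv
  have hΛ : Λzz.IsHermitian := hΛzz.isHermitian
  have hΛne : IsUnit Λzz.det := isUnit_iff_ne_zero.mpr hΛzz.det_pos.ne'
  set P : Matrix (Fin p) (Fin p ⊕ Fin p) ℝ :=
    fromCols (Λzz * Γzz⁻¹) (-1) with hP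
  have hΛT : Λzzᵀ = Λzz := hΛ.eq
  have hΓT : Γzz⁻¹ᵀ = Γzz⁻¹ := hΓi.eq
  have key : Matrix.fromBlocks (Γzz⁻¹ * Λzz * Γzz⁻¹) (-Γzz⁻¹) (-Γzz⁻¹) Λzz⁻¹
      = Pᵀ * Λzz⁻¹ * P := by
    rw [hP, transpose_fromCols, fromRows_mul, fromRows_mul_fromCols]
    simp [Matrix.mul_assoc, Matrix.nonsing_inv_mul_cancel_left _ _ hΛne,
      Matrix.mul_nonsing_inv_cancel_right _ _ hΛne, transpose_mul, hΛT, hΓT]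
  rw [key]
  have hΛinv : (Λzz⁻¹).PosSemidef := hΛzz.inv.posSemidef
  have := hΛinv.conjTranspose_mul_mul_same (P * W)
  simpa [Matrix.mul_assoc, conjTranspose_mul] using this
end
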